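/- (Transfer-matrix eigenvalue pairing) For every N ≥ 2, every m ≥ 0, all λ₁,…,λ_m ∈ ℂ, and every u ∈ ℂ such that sinh(2u+η) ≠ 0, sinh(u−η) ≠ 0, sinh(u+2η) ≠ 0, and sinh(u−λⱼ) ≠ 0 and sinh(u+λⱼ+η) ≠ 0 for all j: τ^(N)(u; λ₁,…,λ_m) = d(u)² · τ^(N−1)(u; λ₁,…,λ_m, η). -/

import Mathlib

noncomputable section
open Complex Matrix

/-- Spin configurations of a chain of `N` sites: `true` encodes `v₊`, `false` encodes `v₋`.
The site with label `i ∈ {1,…,N}` corresponds to the index `i-1 : Fin N`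
(so the leftmost site `N` is the index `N-1`). -/
abbrev Conf (N : ℕ) := Fin N → Bool

/-- The combinatorial-point parameter `η = 2πi/3`. -/
def ηc : ℂ := 2 * (Real.pi : ℂ) * Complex.I / 3

/-- `a(u) = sinh(u+η)/sinh η`. -/
def aF (u : ℂ) : ℂ := Complex.sinh (u + ηc) / Complex.sinh ηc
/-- `b(u) = sinh(u)/sinh η`. -/
def bF (u : ℂ) : ℂ := Complex.sinh u / Complex.sinh ηc
/-- `c(u) = 1`. -/
def cF (_ : ℂ) : ℂ := 1
/-- `d(u) = sinh(u-η)/sinh η`. -/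
def dF (u : ℂ) : ℂ := Complex.sinh (u - ηc) / Complex.sinh ηc
/-- `Δ₊^(N)(u) = a(u)^{2N} sinh(u-η)/sinh η`. -/
def DeltaP (N : ℕ) (u : ℂ) : ℂ :=
  aF u ^ (2 * N) * Complex.sinh (u - ηc) / Complex.sinh ηc

/-- `Δ₋^(N)(u) = -b(u)^{2N} sinh(2u) sinh(u+2η)/sinh η`. -/
def DeltaM (N : ℕ) (u : ℂ) : ℂ :=
  -(bF u ^ (2 * N)) * Complex.sinh (2 * u) * Complex.sinh (u + 2 * ηc) / Complex.sinh ηc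

/-- `λ₁,…,λ_m` satisfy the Bethe equations for the length-`N` chain (cross-multiplied
form): for every `j`,
`-sinh(2λⱼ) Δ₊^(N)(λⱼ) ∏_{k≠j} sinh(λⱼ-λₖ-η) sinh(λⱼ+λₖ)
  = Δ₋^(N)(λⱼ) ∏_{k≠j} sinh(λⱼ-λₖ+η) sinh(λⱼ+λₖ+2η)`. -/
def BetheEq (N m : ℕ) (lam : Fin m → ℂ) : Prop :=
  ∀ j : Fin m,
    -Complex.sinh (2 * lam j) * DeltaP N (lam j) *
        ∏ k ∈ Finset.univ.erase j,
          (Complex.sinh (lam j - lam k - ηc) * Complex.sinh (lam j + lam k))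
      = DeltaM N (lam j) *
        ∏ k ∈ Finset.univ.erase j,
          (Complex.sinh (lam j - lam k + ηc) * Complex.sinh (lam j + lam k + 2 * ηc))
/-- The Bethe-ansatz transfer-matrix eigenvalue `τ^(N)(u; λ₁,…,λ_m)`. -/
def tauF (N m : ℕ) (lam : Fin m → ℂ) (u : ℂ) : ℂ :=
  Complex.sinh (2 * u - ηc) * Complex.sinh (u - ηc) * DeltaP N u
      / Complex.sinh (2 * u + ηc) *
      ∏ j, (Complex.sinh (u - lam j - ηc) * Complex.sinh (u + lam j)) /
        (Complex.sinh (u - lam j) * Complex.sinh (u + lam j + ηc))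
    - Complex.sinh (u - ηc) * DeltaM N u / Complex.sinh (2 * u + ηc) *
      ∏ j, (Complex.sinh (u - lam j + ηc) * Complex.sinh (u + lam j - ηc)) /
        (Complex.sinh (u - lam j) * Complex.sinh (u + lam j + ηc))

/- STATEMENT 19 (transfer-matrix eigenvalue pairing): for every `N ≥ 2`, `m ≥ 0`,
`λ₁,…,λ_m ∈ ℂ` and every `u ∈ ℂ` with `sinh(2u+η) ≠ 0`, `sinh(u-η) ≠ 0`,
`sinh(u+2η) ≠ 0` and `sinh(u-λⱼ) ≠ 0`, `sinh(u+λⱼ+η) ≠ 0` for all `j`. -/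

lemma sinh_shift (z : ℂ) : Complex.sinh (z + 3 * ηc) = Complex.sinh z := by
  have h3 : (3:ℂ) * ηc = ((2*Real.pi:ℝ):ℂ) * Complex.I := by
    unfold ηc; push_cast; ring
  rw [h3, Complex.sinh_add, Complex.sinh_mul_I, Complex.cosh_mul_I]
  simp [Complex.cos_two_pi, Complex.sin_two_pi]

lemma sinh_eta_ne : Complex.sinh ηc ≠ 0 := by
  have h : ηc = ((2*Real.pi/3:ℝ):ℂ) * Complex.I := by unfold ηc; push_cast; ring
  rw [h, Complex.sinh_mul_I]
  have : Real.sin (2*Real.pi/3) > 0 := by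
    apply Real.sin_pos_of_pos_of_lt_pi <;> nlinarith [Real.pi_pos]
  simp only [ne_eq, mul_eq_zero, Complex.I_ne_zero, or_false]
  rw [← Complex.ofReal_sin]
  exact_mod_cast this.ne'

/-- pairing -/

theorem tau_eigenvalue_pairing (N m : ℕ) (hN : 2 ≤ N) (lam : Fin m → ℂ) (u : ℂ)
    (h1 : Complex.sinh (2 * u + ηc) ≠ 0) (h2 : Complex.sinh (u - ηc) ≠ 0)
    (h3 : Complex.sinh (u + 2 * ηc) ≠ 0)
    (h4 : ∀ j, Complex.sinh (u - lam j) ≠ 0)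
    (h5 : ∀ j, Complex.sinh (u + lam j + ηc) ≠ 0) :
    tauF N m lam u = dF u ^ 2 * tauF (N - 1) (m + 1) (Fin.snoc lam ηc) u := by
  obtain ⟨n, rfl⟩ : ∃ n, N = n + 2 := ⟨N - 2, by omega⟩
  have hη := sinh_eta_ne
  have e1 : Complex.sinh (u - ηc - ηc) = Complex.sinh (u + ηc) := by
    rw [← sinh_shift (u - ηc - ηc)]; congr 1; ring
  have e2 : Complex.sinh (u + 2*ηc) = Complex.sinh (u - ηc) := by
    rw [← sinh_shift (u - ηc)]; congr 1; ring
  have e3 : Complex.sinh (u + ηc + ηc) = Complex.sinh (u - ηc) := by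
    rw [← sinh_shift (u - ηc)]; congr 1; ring
  have hn : n + 2 - 1 = n + 1 := rfl
  simp only [tauF, DeltaP, DeltaM, dF, aF, bF, hn, Fin.prod_univ_castSucc,
    Fin.snoc_castSucc, Fin.snoc_last, e1, e2, e3, sub_add_cancel, add_sub_cancel_right]
  generalize (∏ j : Fin m, (Complex.sinh (u - lam j - ηc) * Complex.sinh (u + lam j)) /
      (Complex.sinh (u - lam j) * Complex.sinh (u + lam j + ηc))) = X
  generalize (∏ j : Fin m, (Complex.sinh (u - lam j + ηc) * Complex.sinh (u + lam j - ηc)) /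
      (Complex.sinh (u - lam j) * Complex.sinh (u + lam j + ηc))) = Y
  field_simp
  rw [show 2 * (n + 2) = 2 * (n + 1) + 2 by ring, pow_add, pow_add]
  field_simp
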